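/- arXiv:1610.09783 — 2 statements merged into one kernel-verified Lean document; each statement's English description precedes it below -/
import Mathlib

section
/- Let M be a mixed graph of order n with underlying graph M_U, Hermitian-Randić matrix R_H(M), and p = |det R_H(M)|. Then √(2R_{-1}(M_U) + n(n-1)p^{2/n}) ≤ E_{R_H}(M) ≤ √(2n R_{-1}(M_U)). -/
open Matrix BigOperators

noncomputable section
open scoped Classical

/-- A mixed graph on vertex set `V`, encoded by its Hermitian-adjacency matrix:
entries are `1` for undirected edges, `i`/`-i` for arcs, `0` otherwise. -/
structure MixedGraph (V : Type) [Fintype V] [DecidableEq V] where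
  h : Matrix V V ℂ
  herm : h.IsHermitian
  loopless : ∀ k, h k k = 0
  entries : ∀ k l, h k l = 0 ∨ h k l = 1 ∨ h k l = Complex.I ∨ h k l = -Complex.I

namespace MixedGraph

variable {V : Type} [Fintype V] [DecidableEq V]

/-- Degree of a vertex in the underlying graph. -/
def deg (M : MixedGraph V) (k : V) : ℕ :=
  (Finset.univ.filter fun l => M.h k l ≠ 0).card

/-- The Hermitian–Randić matrix of a mixed graph. -/
def RH (M : MixedGraph V) : Matrix V V ℂ :=
  fun k l => M.h k l / ((Real.sqrt (M.deg k) * Real.sqrt (M.deg l) : ℝ) : ℂ)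

theorem RH_isHermitian (M : MixedGraph V) : (M.RH).IsHermitian := by
  ext k l
  simp only [RH, Matrix.conjTranspose_apply, star_div₀, Complex.star_def,
    Complex.conj_ofReal, M.herm.apply k l, mul_comm (Real.sqrt (M.deg l))]

/-- The Hermitian–Randić energy: sum of absolute values of the eigenvalues of `RH`. -/
def energyRH (M : MixedGraph V) : ℝ := ∑ i, |M.RH_isHermitian.eigenvalues i|

/-- The Hermitian energy: sum of absolute values of the eigenvalues of `H(M)`. -/
def energyH (M : MixedGraph V) : ℝ := ∑ i, |M.herm.eigenvalues i|

/-- The general Randić index `R₋₁` of the underlying graph. -/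
def Rm1 (M : MixedGraph V) : ℝ :=
  (1 / 2) * ∑ k, ∑ l, if M.h k l ≠ 0 then ((M.deg k : ℝ) * (M.deg l : ℝ))⁻¹ else 0

/-- The underlying simple graph of a mixed graph. -/
def underlying (M : MixedGraph V) : SimpleGraph V where
  Adj k l := M.h k l ≠ 0
  symm := by
    constructor
    intro k l hkl h0
    exact hkl (by rw [← M.herm.apply k l, h0, star_zero])
  loopless := ⟨fun k hk => hk (M.loopless k)⟩

end MixedGraph

lemma trace_mul_self_eq_sum_sq {n : Type*} [Fintype n] [DecidableEq n]
    (A : Matrix n n ℂ) (hA : A.IsHermitian) :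
    (A * A).trace = ∑ i, ((hA.eigenvalues i : ℂ))^2 := by
  set U := (hA.eigenvectorUnitary : Matrix n n ℂ) with hU
  set D := Matrix.diagonal ((RCLike.ofReal : ℝ → ℂ) ∘ hA.eigenvalues) with hD
  have h1 : star U * U = 1 := Unitary.coe_star_mul_self hA.eigenvectorUnitary
  have hspec : A = U * D * star U := hA.spectral_theorem
  have hmul : A * A = U * (D * D) * star U := by
    rw [hspec]
    simp only [Matrix.mul_assoc]
    rw [← Matrix.mul_assoc (star U) U, h1, Matrix.one_mul]
  rw [hmul, Matrix.trace_mul_comm, ← Matrix.mul_assoc, ← Matrix.mul_assoc, h1,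
    Matrix.one_mul, hD, Matrix.diagonal_mul_diagonal, Matrix.trace_diagonal]
  simp [sq]

namespace MixedGraph

variable {V : Type} [Fintype V] [DecidableEq V]

lemma deg_pos_of_ne {M : MixedGraph V} {k l : V} (h : M.h k l ≠ 0) : 0 < M.deg k :=
  Finset.card_pos.mpr ⟨l, by simp [deg, h]⟩

lemma normSq_RH (M : MixedGraph V) (k l : V) :
    Complex.normSq (M.RH k l) =
      if M.h k l ≠ 0 then ((M.deg k : ℝ) * (M.deg l : ℝ))⁻¹ else 0 := by
  by_cases h : M.h k l = 0
  · simp [RH, h]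
  · have habs : Complex.normSq (M.h k l) = 1 := by
      rcases M.entries k l with h0 | h1 | h2 | h3
      · exact absurd h0 h
      · simp [h1]
      · simp [h2]
      · simp [h3]
    have hk : (0:ℝ) ≤ (M.deg k : ℝ) := by positivity
    have hl : (0:ℝ) ≤ (M.deg l : ℝ) := by positivity
    rw [RH, if_pos h, map_div₀, habs, Complex.normSq_ofReal]
    rw [mul_mul_mul_comm, Real.mul_self_sqrt hk, Real.mul_self_sqrt hl, one_div]

lemma sum_sq_eigenvalues (M : MixedGraph V) :
    ∑ i, (M.RH_isHermitian.eigenvalues i)^2 = 2 * M.Rm1 := by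
  have h1 : (M.RH * M.RH).trace = ∑ i, ((M.RH_isHermitian.eigenvalues i : ℂ))^2 :=
    trace_mul_self_eq_sum_sq M.RH M.RH_isHermitian
  have h2 : (M.RH * M.RH).trace = ((2 * M.Rm1 : ℝ) : ℂ) := by
    have e1 : (M.RH * M.RH).trace = ∑ k, ∑ l, ((Complex.normSq (M.RH k l) : ℝ) : ℂ) := by
      rw [Matrix.trace]
      refine Finset.sum_congr rfl fun k _ => ?_
      rw [Matrix.diag_apply, Matrix.mul_apply]
      refine Finset.sum_congr rfl fun l _ => ?_
      rw [← M.RH_isHermitian.apply l k, Complex.star_def, Complex.mul_conj]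
    have e2 : (2 : ℝ) * M.Rm1 = ∑ k, ∑ l, Complex.normSq (M.RH k l) := by
      rw [Rm1, ← mul_assoc, show (2:ℝ) * (1/2) = 1 by norm_num, one_mul]
      exact Finset.sum_congr rfl fun k _ => Finset.sum_congr rfl fun l _ =>
        (M.normSq_RH k l).symm
    rw [e1, e2]
    push_cast
    rfl
  rw [h2] at h1
  have := h1.symm
  push_cast at this
  have h3 := congrArg Complex.re this
  simpa [← Complex.ofReal_pow] using h3

end MixedGraph

/-- with `p = |det R_H(M)|`,
`√(2R₋₁(M_U) + n(n-1)p^{2/n}) ≤ E_{R_H}(M) ≤ √(2n R₋₁(M_U))`. -/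
theorem energyRH_bounds {V : Type} [Fintype V] [DecidableEq V] (M : MixedGraph V) :
    Real.sqrt (2 * M.Rm1 + (Fintype.card V : ℝ) * ((Fintype.card V : ℝ) - 1) *
        ‖M.RH.det‖ ^ ((2 : ℝ) / (Fintype.card V : ℝ))) ≤ M.energyRH ∧
      M.energyRH ≤ Real.sqrt (2 * (Fintype.card V : ℝ) * M.Rm1) := by
  classical
  set n : ℕ := Fintype.card V with hn
  set e : V → ℝ := fun i => |M.RH_isHermitian.eigenvalues i| with he
  have he0 : ∀ i, 0 ≤ e i := fun i => abs_nonneg _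
  have hsumsq : ∑ i, e i ^ 2 = 2 * M.Rm1 := by
    simpa only [he, sq_abs] using M.sum_sq_eigenvalues
  have hE : M.energyRH = ∑ i, e i := rfl
  have hE0 : 0 ≤ ∑ i, e i := Finset.sum_nonneg fun i _ => he0 i
  have hRm1 : 0 ≤ 2 * M.Rm1 := by rw [← hsumsq]; positivity
  have hsplit : (∑ i, e i) ^ 2
      = ∑ i, e i ^ 2 + ∑ q ∈ (Finset.univ : Finset V).offDiag, e q.1 * e q.2 := by
    rw [sq, Finset.sum_mul_sum,
      ← Finset.sum_product' (f := fun i j => e i * e j),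
      ← Finset.diag_union_offDiag (Finset.univ : Finset V),
      Finset.sum_union (Finset.disjoint_diag_offDiag _), Finset.sum_diag]
    simp [sq]
  constructor
  · -- lower bound
    rw [hE]
    have h2 : (n:ℝ) * ((n:ℝ) - 1) * ‖M.RH.det‖ ^ ((2:ℝ)/(n:ℝ))
        ≤ ∑ q ∈ (Finset.univ : Finset V).offDiag, e q.1 * e q.2 := by
      rcases Nat.lt_or_ge n 2 with hn2 | hn2
      · have hzero : (n:ℝ) * ((n:ℝ) - 1) = 0 := by
          have : n = 0 ∨ n = 1 := by omega
          rcases this with h | h <;> rw [h] <;> norm_num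
        rw [hzero, zero_mul]
        exact Finset.sum_nonneg fun q _ => mul_nonneg (he0 _) (he0 _)
      · have hn0 : (n:ℝ) ≠ 0 := Nat.cast_ne_zero.mpr (by omega)
        have h2r : (2:ℝ) ≤ (n:ℝ) := by exact_mod_cast hn2
        have hn1 : (n:ℝ) - 1 ≠ 0 := by linarith
        set p := ‖M.RH.det‖ with hpdef
        have hp : p = ∏ i, e i := by
          rw [hpdef, M.RH_isHermitian.det_eq_prod_eigenvalues, norm_prod]
          exact Finset.prod_congr rfl fun i _ => by simp [he]
        by_cases hp0 : p = 0
        · rw [hp0, Real.zero_rpow (div_ne_zero two_ne_zero hn0), mul_zero]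
          exact Finset.sum_nonneg fun q _ => mul_nonneg (he0 _) (he0 _)
        · have hppos : 0 < p := lt_of_le_of_ne (norm_nonneg _) (Ne.symm hp0)
          set N : ℝ := (n:ℝ) * ((n:ℝ) - 1) with hNdef
          have hNpos : 0 < N := by rw [hNdef]; nlinarith
          have hcard : (((Finset.univ : Finset V).offDiag.card : ℝ)) = N := by
            rw [Finset.offDiag_card, Finset.card_univ, ← hn]
            have hle : n ≤ n * n := Nat.le_mul_of_pos_left n (by omega)
            push_cast [Nat.cast_sub hle]
            rw [hNdef]; ring
          have hAM := Real.geom_mean_le_arith_mean_weighted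
            ((Finset.univ : Finset V).offDiag) (fun _ => 1/N)
            (fun q => e q.1 * e q.2)
            (fun q _ => by positivity)
            (by rw [Finset.sum_const, nsmul_eq_mul, hcard, one_div,
                  mul_inv_cancel₀ hNpos.ne'])
            (fun q _ => mul_nonneg (he0 _) (he0 _))
          have hall : ∏ q ∈ (Finset.univ : Finset V) ×ˢ Finset.univ, (e q.1 * e q.2)
              = p ^ (2*n) := by
            rw [Finset.prod_product' (f := fun i j => e i * e j)]
            simp only [Finset.prod_mul_distrib, Finset.prod_const, Finset.prod_pow,
              Finset.card_univ, ← hn, ← hp]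
            rw [← pow_add, two_mul]
          have hdiag : ∏ q ∈ (Finset.univ : Finset V).diag, (e q.1 * e q.2) = p^2 := by
            rw [Finset.prod_diag]
            show ∏ i : V, e i * e i = p^2
            rw [Finset.prod_mul_distrib, ← hp, sq]
          have hsplitp : p^(2*n) = p^2 * ∏ q ∈ (Finset.univ : Finset V).offDiag,
              (e q.1 * e q.2) := by
            rw [← hall, ← Finset.diag_union_offDiag (Finset.univ : Finset V),
              Finset.prod_union (Finset.disjoint_diag_offDiag _), hdiag]
          have hprodoff : ∏ q ∈ (Finset.univ : Finset V).offDiag, (e q.1 * e q.2)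
              = p ^ (2*n) / p^2 := by
            rw [eq_div_iff (pow_ne_zero 2 hp0), hsplitp]; ring
          have hgm : ∏ q ∈ (Finset.univ : Finset V).offDiag,
              (e q.1 * e q.2) ^ ((1:ℝ)/N) = p ^ ((2:ℝ)/(n:ℝ)) := by
            rw [Real.finset_prod_rpow _ _ (fun q _ => mul_nonneg (he0 _) (he0 _)),
              hprodoff, Real.div_rpow (by positivity) (by positivity),
              ← Real.rpow_natCast p (2*n), ← Real.rpow_natCast p 2,
              ← Real.rpow_mul hppos.le, ← Real.rpow_mul hppos.le,
              ← Real.rpow_sub hppos]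
            congr 1
            push_cast
            rw [hNdef]
            field_simp
          rw [hgm, ← Finset.mul_sum] at hAM
          calc N * p ^ ((2:ℝ)/(n:ℝ))
              ≤ N * ((1/N) * ∑ q ∈ (Finset.univ : Finset V).offDiag, e q.1 * e q.2) :=
                mul_le_mul_of_nonneg_left hAM hNpos.le
            _ = ∑ q ∈ (Finset.univ : Finset V).offDiag, e q.1 * e q.2 := by
                field_simp
    have hle : 2 * M.Rm1 + (n:ℝ) * ((n:ℝ) - 1) *
        ‖M.RH.det‖ ^ ((2:ℝ)/(n:ℝ)) ≤ (∑ i, e i) ^ 2 := by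
      rw [hsplit, hsumsq]; linarith
    calc Real.sqrt (2 * M.Rm1 + (n:ℝ) * ((n:ℝ) - 1) *
          ‖M.RH.det‖ ^ ((2:ℝ)/(n:ℝ)))
        ≤ Real.sqrt ((∑ i, e i) ^ 2) := Real.sqrt_le_sqrt hle
      _ = ∑ i, e i := Real.sqrt_sq hE0
  · -- upper bound
    rw [hE]
    have h2n : 0 ≤ 2 * (n:ℝ) * M.Rm1 := by
      have : (0:ℝ) ≤ (n:ℝ) := Nat.cast_nonneg n
      nlinarith
    rw [Real.le_sqrt hE0 h2n]
    have := sq_sum_le_card_mul_sum_sq (s := (Finset.univ : Finset V)) (f := e)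
    rw [Finset.card_univ, ← hn, hsumsq] at this
    calc (∑ i, e i) ^ 2 ≤ (n:ℝ) * (2 * M.Rm1) := this
      _ = 2 * (n:ℝ) * M.Rm1 := by ring
end
end

section
/- If M is a positive mixed graph (every mixed cycle of M has positive value) with underlying graph M_U, then R_H(M) and R(M_U) have the same spectrum, where R(M_U) is the Randić matrix of M_U. -/
open Matrix BigOperators

noncomputable section
open scoped Classical

/-- The Randić matrix of a simple graph (over ℂ, with real entries). -/
def randicMatrix {V : Type} [Fintype V] [DecidableEq V] (G : SimpleGraph V) :
    Matrix V V ℂ :=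
  fun k l => if G.Adj k l
    then ((Real.sqrt (G.degree k) * Real.sqrt (G.degree l) : ℝ) : ℂ)⁻¹ else 0

theorem randicMatrix_isHermitian {V : Type} [Fintype V] [DecidableEq V]
    (G : SimpleGraph V) : (randicMatrix G).IsHermitian := by
  ext k l
  simp only [randicMatrix, Matrix.conjTranspose_apply]
  by_cases h : G.Adj k l
  · rw [if_pos h, if_pos h.symm, mul_comm (Real.sqrt (G.degree l))]
    simp [← Complex.ofReal_inv]
  · rw [if_neg (fun hh : G.Adj l k => h hh.symm), if_neg h, star_zero]

/-- The Randić energy of a simple graph. -/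
def randicEnergy {V : Type} [Fintype V] [DecidableEq V] (G : SimpleGraph V) : ℝ :=
  ∑ i, |(randicMatrix_isHermitian G).eigenvalues i|

/-- The value of a list of vertices: the product of the corresponding
Hermitian–Randić matrix entries along consecutive pairs. -/
def MixedGraph.listValue {V : Type} [Fintype V] [DecidableEq V]
    (M : MixedGraph V) : List V → ℂ
  | [] => 1
  | [_] => 1
  | a :: b :: rest => M.RH a b * M.listValue (b :: rest)

section AuxiliaryLemmas

open SimpleGraph

namespace MixedGraph

variable {V : Type} [Fintype V] [DecidableEq V]

/-- The gain of a walk: the product of `M.h` entries along the walk. -/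
def gain (M : MixedGraph V) : ∀ {u v : V}, M.underlying.Walk u v → ℂ
  | _, _, .nil => 1
  | u, _, @SimpleGraph.Walk.cons _ _ _ b _ _ p => M.h u b * M.gain p

@[simp] lemma gain_nil (M : MixedGraph V) {u : V} : M.gain (Walk.nil (u := u)) = 1 := rfl

@[simp] lemma gain_cons (M : MixedGraph V) {u b v : V} (e : M.underlying.Adj u b)
    (p : M.underlying.Walk b v) : M.gain (Walk.cons e p) = M.h u b * M.gain p := rfl

lemma gain_append (M : MixedGraph V) {u v w : V} (p : M.underlying.Walk u v)
    (q : M.underlying.Walk v w) : M.gain (p.append q) = M.gain p * M.gain q := by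
  induction p with
  | nil => simp
  | cons e p ih => simp [Walk.cons_append, ih, mul_assoc]

lemma h_adj {M : MixedGraph V} {k l : V} (h : M.underlying.Adj k l) : M.h k l ≠ 0 := h

lemma h_mul_star (M : MixedGraph V) {k l : V} (hadj : M.underlying.Adj k l) :
    M.h k l * star (M.h k l) = 1 := by
  rcases M.entries k l with h0 | h1 | h2 | h3
  · exact absurd h0 (h_adj hadj)
  · simp [h1]
  · rw [h2]; simp
  · rw [h3]; simp

lemma h_symm (M : MixedGraph V) (k l : V) : M.h l k = star (M.h k l) := by
  rw [← M.herm.apply l k]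

lemma gain_reverse (M : MixedGraph V) {u v : V} (p : M.underlying.Walk u v) :
    M.gain p.reverse = star (M.gain p) := by
  induction p with
  | nil => simp
  | cons e p ih =>
    rw [Walk.reverse_cons, gain_append, ih, gain_cons, gain_nil, gain_cons,
      h_symm M _ _]
    simp [mul_comm]

lemma gain_mul_star (M : MixedGraph V) {u v : V} (p : M.underlying.Walk u v) :
    M.gain p * star (M.gain p) = 1 := by
  induction p with
  | nil => simp
  | cons e p ih =>
    rw [gain_cons, star_mul']
    calc M.h _ _ * M.gain p * (star (M.h _ _) * star (M.gain p))
        = (M.h _ _ * star (M.h _ _)) * (M.gain p * star (M.gain p)) := by ring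
      _ = 1 := by rw [h_mul_star M e, ih, one_mul]


lemma gain_closed (M : MixedGraph V)
    (hcyc : ∀ (v : V) (w : M.underlying.Walk v v), w.IsCycle → M.gain w = 1) :
    ∀ (n : ℕ) (v : V) (w : M.underlying.Walk v v), w.length = n → M.gain w = 1 := by
  intro n
  induction n using Nat.strong_induction_on with
  | _ n IH =>
  intro v w hlen
  by_cases hnd : w.support.tail.Nodup
  · -- nodup case
    cases w with
    | nil => simp
    | cons e p =>
      rename_i b
      by_cases hc : (Walk.cons e p).IsCycle
      · exact hcyc _ _ hc
      · have hps : (Walk.cons e p).support.tail = p.support := by simp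
        have hpath : p.IsPath := (SimpleGraph.Walk.isPath_def p).mpr (hps ▸ hnd)
        have hedge : s(v, b) ∈ p.edges := by
          by_contra hne
          exact hc ((SimpleGraph.Walk.cons_isCycle_iff p e).mpr ⟨hpath, hne⟩)
        cases p with
        | nil => exact absurd e (M.underlying.irrefl)
        | cons e' q =>
          rename_i c
          rw [SimpleGraph.Walk.edges_cons, List.mem_cons] at hedge
          rcases hedge with heq | hmem
          · have hvb : v ≠ b := M.underlying.ne_of_adj e
            have hvc : v = c := by
              rw [Sym2.eq_iff] at heq
              rcases heq with ⟨h1, h2⟩ | ⟨h1, h2⟩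
              · exact absurd h1 hvb
              · exact h1
            subst hvc
            have hq : q = SimpleGraph.Walk.nil := by
              cases q with
              | nil => rfl
              | cons e'' r =>
                exfalso
                have hnd2 := hpath.support_nodup
                rw [SimpleGraph.Walk.support_cons, List.nodup_cons] at hnd2
                have hnd3 := hnd2.2
                rw [SimpleGraph.Walk.support_cons, List.nodup_cons] at hnd3
                exact hnd3.1 (SimpleGraph.Walk.end_mem_support r)
            subst hq
            rw [gain_cons, gain_cons, gain_nil, mul_one, h_symm M v b]
            exact M.h_mul_star e
          · exfalso
            have hb : b ∈ q.support := SimpleGraph.Walk.snd_mem_support_of_mem_edges q hmem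
            have hnd2 := hpath.support_nodup
            rw [SimpleGraph.Walk.support_cons, List.nodup_cons] at hnd2
            exact hnd2.1 hb
  · -- duplicate in tail
    obtain ⟨x, hdup⟩ := List.exists_duplicate_iff_not_nodup.mpr hnd
    have hcnt : 2 ≤ (w.support.tail).count x := List.duplicate_iff_two_le_count.mp hdup
    by_cases hxv : x = v
    · subst hxv
      cases w with
      | nil => simp
      | cons e p =>
        rename_i b
        have hn : p.length + 1 = n := by simpa using hlen
        have hps : (Walk.cons e p).support.tail = p.support := by simp
        rw [hps] at hcnt
        have hx : x ∈ p.support := List.count_pos_iff.mp (by omega)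
        have hspec := p.take_spec hx
        have hc1 : (p.takeUntil x hx).support.count x = 1 :=
          p.count_support_takeUntil_eq_one hx
        have hsupp : p.support
            = (p.takeUntil x hx).support ++ (p.dropUntil x hx).support.tail := by
          conv_lhs => rw [← hspec]
          rw [SimpleGraph.Walk.support_append]
        have hc2 : 1 ≤ (p.dropUntil x hx).support.tail.count x := by
          rw [hsupp, List.count_append, hc1] at hcnt
          omega
        have hp2len : 1 ≤ (p.dropUntil x hx).length := by
          have hmem : x ∈ (p.dropUntil x hx).support.tail := List.count_pos_iff.mp (by omega)
          have hl := List.length_pos_of_mem hmem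
          rw [List.length_tail, SimpleGraph.Walk.length_support] at hl
          omega
        have hlens : (p.takeUntil x hx).length + (p.dropUntil x hx).length = p.length := by
          conv_rhs => rw [← hspec]
          rw [SimpleGraph.Walk.length_append]
        have h1 : M.gain (Walk.cons e (p.takeUntil x hx)) = 1 := by
          apply IH (1 + (p.takeUntil x hx).length) (by omega) x
          simp [SimpleGraph.Walk.length_cons]; omega
        have h2 : M.gain (p.dropUntil x hx) = 1 :=
          IH (p.dropUntil x hx).length (by omega) x _ rfl
        have hg : M.gain (Walk.cons e p)
            = M.gain (Walk.cons e (p.takeUntil x hx)) * M.gain (p.dropUntil x hx) := by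
          conv_lhs => rw [← hspec]
          rw [← SimpleGraph.Walk.cons_append, gain_append]
        rw [hg, h1, h2, mul_one]
    · -- x ≠ v
      have hxs : x ∈ w.support := by
        have : x ∈ w.support.tail := List.count_pos_iff.mp (by omega)
        exact List.mem_of_mem_tail this
      have hcnt' : 2 ≤ w.support.count x := by
        rw [w.support_eq_cons, List.count_cons_of_ne (Ne.symm hxv)]
        exact hcnt
      have hspec := w.take_spec hxs
      have hc1 : (w.takeUntil x hxs).support.count x = 1 :=
        w.count_support_takeUntil_eq_one hxs
      have hsupp : w.support
          = (w.takeUntil x hxs).support ++ (w.dropUntil x hxs).support.tail := by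
        conv_lhs => rw [← hspec]
        rw [SimpleGraph.Walk.support_append]
      have hc2 : 1 ≤ (w.dropUntil x hxs).support.tail.count x := by
        rw [hsupp, List.count_append, hc1] at hcnt'
        omega
      have hx2 : x ∈ (w.dropUntil x hxs).support.tail := List.count_pos_iff.mp (by omega)
      have hw1len : 1 ≤ (w.takeUntil x hxs).length := by
        by_contra hl
        push_neg at hl
        have h0 : (w.takeUntil x hxs).length = 0 := by omega
        exact hxv (SimpleGraph.Walk.eq_of_length_eq_zero h0).symm
      cases hw2e : w.dropUntil x hxs with
      | nil => rw [hw2e] at hx2; simp at hx2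
      | cons e q =>
        rename_i b
        rw [hw2e] at hx2
        have hxq : x ∈ q.support := by simpa using hx2
        have hqspec := q.take_spec hxq
        have hlens : (w.takeUntil x hxs).length
            + (1 + ((q.takeUntil x hxq).length + (q.dropUntil x hxq).length)) = n := by
          rw [← hlen]
          conv_rhs => rw [← hspec]
          rw [SimpleGraph.Walk.length_append, hw2e, SimpleGraph.Walk.length_cons]
          conv_rhs => rw [← hqspec]
          rw [SimpleGraph.Walk.length_append]
          ring
        have h1 : M.gain (Walk.cons e (q.takeUntil x hxq)) = 1 := by
          apply IH (1 + (q.takeUntil x hxq).length) (by omega) x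
          simp [SimpleGraph.Walk.length_cons]; omega
        have h2 : M.gain ((q.dropUntil x hxq).append (w.takeUntil x hxs)) = 1 := by
          apply IH ((q.dropUntil x hxq).length + (w.takeUntil x hxs).length) (by omega) x
          rw [SimpleGraph.Walk.length_append]
        have hg : M.gain w = M.gain (w.takeUntil x hxs)
            * (M.h x b * (M.gain (q.takeUntil x hxq) * M.gain (q.dropUntil x hxq))) := by
          conv_lhs => rw [← hspec]
          rw [gain_append, hw2e, gain_cons]
          conv_lhs => rw [← hqspec]
          rw [gain_append]
        rw [gain_append] at h2
        rw [gain_cons] at h1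
        calc M.gain w = (M.h x b * M.gain (q.takeUntil x hxq))
              * (M.gain (q.dropUntil x hxq) * M.gain (w.takeUntil x hxs)) := by rw [hg]; ring
          _ = 1 := by rw [h1, h2, mul_one]


lemma deg_pos_of_adj (M : MixedGraph V) {x y : V} (h : M.underlying.Adj x y) :
    0 < M.deg x := by
  apply Finset.card_pos.mpr
  exact ⟨y, Finset.mem_filter.mpr ⟨Finset.mem_univ y, h⟩⟩

lemma mem_support_deg_pos (M : MixedGraph V) {u v : V} (p : M.underlying.Walk u v)
    (hv : 0 < M.deg v) : ∀ x ∈ p.support, 0 < M.deg x := by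
  induction p with
  | nil => intro x hx; rw [SimpleGraph.Walk.support_nil, List.mem_singleton] at hx; rwa [hx]
  | cons e q ih =>
    intro x hx
    rw [SimpleGraph.Walk.support_cons, List.mem_cons] at hx
    rcases hx with rfl | hx
    · exact M.deg_pos_of_adj e
    · exact ih hv x hx

lemma listValue_support (M : MixedGraph V) {u v : V} (p : M.underlying.Walk u v)
    (hdeg : ∀ x ∈ p.support, 0 < M.deg x) :
    M.listValue p.support
      = M.gain p * ((Real.sqrt (M.deg u) : ℝ) : ℂ)⁻¹
        * (p.support.tail.map fun x => ((M.deg x : ℂ))⁻¹).prod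
        * ((Real.sqrt (M.deg v) : ℝ) : ℂ) := by
  induction p with
  | nil =>
    rename_i a
    have ha : 0 < M.deg a := hdeg a (by simp)
    have hs : ((Real.sqrt (M.deg a) : ℝ) : ℂ) ≠ 0 := by
      simp only [ne_eq, Complex.ofReal_eq_zero]
      positivity
    simp [MixedGraph.listValue, inv_mul_cancel₀ hs]
  | cons e q ih =>
    rename_i a b c
    have hb : 0 < M.deg b := hdeg b (by simp)
    have hsb : ((Real.sqrt (M.deg b) : ℝ) : ℂ) * ((Real.sqrt (M.deg b) : ℝ) : ℂ)
        = (M.deg b : ℂ) := by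
      rw [← Complex.ofReal_mul, Real.mul_self_sqrt (by positivity)]
      norm_num
    have hq := ih (fun x hx => hdeg x (by simp [hx]))
    have hsupp : (Walk.cons e q).support = a :: b :: q.support.tail := by
      rw [SimpleGraph.Walk.support_cons]
      conv_lhs => rw [q.support_eq_cons]
    rw [hsupp]
    show M.RH a b * M.listValue (b :: q.support.tail) = _
    rw [← q.support_eq_cons, hq, gain_cons, List.tail_cons]
    have hprod : (List.map (fun x => ((M.deg x : ℂ))⁻¹) q.support).prod
        = (M.deg b : ℂ)⁻¹ * (List.map (fun x => ((M.deg x : ℂ))⁻¹) q.support.tail).prod := by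
      conv_lhs => rw [q.support_eq_cons]
      rw [List.map_cons, List.prod_cons]
    rw [hprod]
    have hRH : M.RH a b = M.h a b
        * (((Real.sqrt (M.deg a) : ℝ) : ℂ)⁻¹ * ((Real.sqrt (M.deg b) : ℝ) : ℂ)⁻¹) := by
      rw [RH, div_eq_mul_inv, Complex.ofReal_mul, mul_inv]
    have hdb : (M.deg b : ℂ)⁻¹ = ((Real.sqrt (M.deg b) : ℝ) : ℂ)⁻¹
        * ((Real.sqrt (M.deg b) : ℝ) : ℂ)⁻¹ := by
      rw [← mul_inv, hsb]
    rw [hRH, hdb]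
    ring

lemma gain_cycle_eq_one (M : MixedGraph V)
    (hpos : ∀ (v : V) (w : M.underlying.Walk v v), w.IsCycle →
      M.listValue w.support =
        (w.support.tail.map fun x => ((M.deg x : ℂ))⁻¹).prod)
    (v : V) (w : M.underlying.Walk v v) (hw : w.IsCycle) : M.gain w = 1 := by
  have hvdeg : 0 < M.deg v := by
    cases w with
    | nil => exact absurd hw (by simp [SimpleGraph.Walk.isCycle_def, SimpleGraph.Walk.isCircuit_def])
    | cons e q => exact M.deg_pos_of_adj e
  have hdeg := M.mem_support_deg_pos w hvdeg
  have hlv := M.listValue_support w hdeg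
  rw [hpos v w hw] at hlv
  have hT : (w.support.tail.map fun x => ((M.deg x : ℂ))⁻¹).prod ≠ 0 := by
    apply List.prod_ne_zero
    intro h0
    rw [List.mem_map] at h0
    obtain ⟨x, hx, hx0⟩ := h0
    have : 0 < M.deg x := hdeg x (List.mem_of_mem_tail hx)
    rw [inv_eq_zero, Nat.cast_eq_zero] at hx0
    omega
  have hs : ((Real.sqrt (M.deg v) : ℝ) : ℂ) ≠ 0 := by
    simp only [ne_eq, Complex.ofReal_eq_zero]
    positivity
  have key : M.gain w * (w.support.tail.map fun x => ((M.deg x : ℂ))⁻¹).prod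
      = 1 * (w.support.tail.map fun x => ((M.deg x : ℂ))⁻¹).prod := by
    rw [one_mul]
    calc M.gain w * (w.support.tail.map fun x => ((M.deg x : ℂ))⁻¹).prod
        = (M.gain w * (((Real.sqrt (M.deg v) : ℝ) : ℂ))⁻¹
            * (w.support.tail.map fun x => ((M.deg x : ℂ))⁻¹).prod
            * ((Real.sqrt (M.deg v) : ℝ) : ℂ)) := by
          field_simp
      _ = (w.support.tail.map fun x => ((M.deg x : ℂ))⁻¹).prod := hlv.symm
  exact mul_right_cancel₀ hT key


lemma gain_cast (M : MixedGraph V) {u u' v : V} (h : u = u') (p : M.underlying.Walk u v) :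
    M.gain (h ▸ p) = M.gain p := by subst h; rfl

lemma gain_path_indep (M : MixedGraph V)
    (hall : ∀ (v : V) (w : M.underlying.Walk v v), M.gain w = 1)
    {u v : V} (p q : M.underlying.Walk u v) : M.gain p = M.gain q := by
  have h1 : M.gain (p.append q.reverse) = 1 := hall u (p.append q.reverse)
  rw [gain_append, gain_reverse] at h1
  calc M.gain p = M.gain p * (star (M.gain q) * M.gain q) := by
        rw [mul_comm (star (M.gain q)), M.gain_mul_star q, mul_one]
    _ = (M.gain p * star (M.gain q)) * M.gain q := by ring
    _ = M.gain q := by rw [h1, one_mul]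

lemma degree_underlying (M : MixedGraph V) (k : V) :
    M.underlying.degree k = M.deg k := by
  rw [SimpleGraph.degree, deg]
  congr 1
  ext y
  simp only [SimpleGraph.mem_neighborFinset, Finset.mem_filter, Finset.mem_univ, true_and]
  rfl

end MixedGraph

lemma charpoly_conj_aux {V : Type} [Fintype V] [DecidableEq V]
    (A P Q : Matrix V V ℂ) (hPQ : P * Q = 1) :
    (P * A * Q).charpoly = A.charpoly := by
  classical
  set Cm : Matrix V V ℂ →+* Matrix V V (Polynomial ℂ) := RingHom.mapMatrix Polynomial.C with hCm
  have hPQm : (Cm P) * (Cm Q) = 1 := by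
    rw [← _root_.map_mul, hPQ, _root_.map_one]
  have h1 : Matrix.charmatrix (P * A * Q) = (Cm P) * Matrix.charmatrix A * (Cm Q) := by
    rw [Matrix.charmatrix, Matrix.charmatrix]
    rw [mul_sub, sub_mul]
    congr 1
    · have hcomm : Matrix.scalar V (Polynomial.X : Polynomial ℂ) * (Cm Q)
          = (Cm Q) * Matrix.scalar V (Polynomial.X : Polynomial ℂ) :=
        (Matrix.scalar_commute _ (fun r' => Commute.all _ r') _)
      calc Matrix.scalar V (Polynomial.X : Polynomial ℂ)
          = Matrix.scalar V (Polynomial.X : Polynomial ℂ) * ((Cm P) * (Cm Q)) := by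
            rw [hPQm, mul_one]
        _ = (Cm P) * Matrix.scalar V (Polynomial.X : Polynomial ℂ) * (Cm Q) := by
            rw [← mul_assoc]
            rw [(Matrix.scalar_commute (Polynomial.X : Polynomial ℂ)
              (fun r' => Commute.all _ r') (Cm P)).eq]
    · rw [← _root_.map_mul, ← _root_.map_mul]
  rw [Matrix.charpoly, Matrix.charpoly, h1, Matrix.det_mul, Matrix.det_mul]
  have : (Cm P).det * (Cm Q).det = 1 := by
    rw [← Matrix.det_mul, hPQm, Matrix.det_one]
  calc (Cm P).det * (Matrix.charmatrix A).det * (Cm Q).det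
      = (Matrix.charmatrix A).det * ((Cm P).det * (Cm Q).det) := by ring
    _ = (Matrix.charmatrix A).det := by rw [this, mul_one]

end AuxiliaryLemmas

/-- if every mixed cycle of `M` is positive (its value equals
`∏_{v ∈ V(C)} 1/d(v)`), then `R_H(M)` and the Randić matrix of the underlying
graph have the same spectrum (equal characteristic polynomials). -/
theorem charpoly_RH_eq_of_positive {V : Type} [Fintype V] [DecidableEq V]
    (M : MixedGraph V)
    (hpos : ∀ (v : V) (w : M.underlying.Walk v v), w.IsCycle →
      M.listValue w.support =
        (w.support.tail.map fun x => ((M.deg x : ℂ))⁻¹).prod) :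
    M.RH.charpoly = (randicMatrix M.underlying).charpoly := by
  classical
  have hcyc := M.gain_cycle_eq_one hpos
  have hall : ∀ (v : V) (w : M.underlying.Walk v v), M.gain w = 1 :=
    fun v w => M.gain_closed hcyc w.length v w rfl
  have hre : ∀ v : V, M.underlying.Reachable ((M.underlying.connectedComponentMk v).out) v :=
    fun v => SimpleGraph.ConnectedComponent.exact (Quot.out_eq _)
  set θ : V → ℂ := fun v => M.gain ((hre v).some) with hθ
  have hunit : ∀ v, θ v * star (θ v) = 1 := fun v => M.gain_mul_star _
  have key : ∀ k l, M.underlying.Adj k l → θ l = θ k * M.h k l := by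
    intro k l e
    have hcomp : M.underlying.connectedComponentMk k = M.underlying.connectedComponentMk l :=
      SimpleGraph.ConnectedComponent.sound e.reachable
    have hout : (M.underlying.connectedComponentMk k).out
        = (M.underlying.connectedComponentMk l).out := by rw [hcomp]
    calc θ l
        = M.gain (hout ▸ ((hre k).some.append (SimpleGraph.Walk.cons e SimpleGraph.Walk.nil))) :=
          M.gain_path_indep hall _ _
      _ = M.gain ((hre k).some.append (SimpleGraph.Walk.cons e SimpleGraph.Walk.nil)) :=
          M.gain_cast hout _
      _ = θ k * M.h k l := by
          rw [M.gain_append, MixedGraph.gain_cons, MixedGraph.gain_nil, mul_one]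
  have hstar : ∀ k l, M.underlying.Adj k l → star (θ k) * θ l = M.h k l := by
    intro k l hadj
    rw [key k l hadj]
    calc star (θ k) * (θ k * M.h k l) = (θ k * star (θ k)) * M.h k l := by ring
      _ = M.h k l := by rw [hunit k, one_mul]
  have hmat : M.RH = Matrix.diagonal (fun v => star (θ v))
      * randicMatrix M.underlying * Matrix.diagonal θ := by
    ext k l
    simp only [Matrix.mul_diagonal, Matrix.diagonal_mul]
    by_cases hadj : M.underlying.Adj k l
    · rw [MixedGraph.RH, randicMatrix, if_pos hadj, M.degree_underlying, M.degree_underlying,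
        div_eq_mul_inv, ← hstar k l hadj]
      ring
    · have h0 : M.h k l = 0 := not_not.mp hadj
      rw [MixedGraph.RH, randicMatrix, if_neg hadj, h0, zero_div, mul_zero, zero_mul]
  rw [hmat]
  apply charpoly_conj_aux
  rw [Matrix.diagonal_mul_diagonal]
  have : (fun v => star (θ v) * θ v) = fun _ => (1 : ℂ) :=
    funext fun v => by rw [mul_comm]; exact hunit v
  rw [this, Matrix.diagonal_one]
end
end
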